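/- Let X be a finite pure simplicial complex of dimension at least 2, let G be a group acting on a finite nonempty set S, let φ ∈ C¹(X;G), and let f:Y_φ→X be the projection map. Then |S|·m_f(Y_φ) = Σ_{u∈X(0)} c_X(u) · Σ_{e={v₁,v₂}∈lk(X,u)(1)} (|S| − fix(d₁φ(u,v₁,v₂)))·c_{lk(X,u)}(e). (The summand is well defined since fix(g) is invariant under inversion and conjugation of g, and the values of d₁φ on the reorderings of a 2-simplex are obtained from each other by inversion and conjugation.) -/
import Mathlib


open Finset

variable {V : Type*} [DecidableEq V]

/-- A finite abstract simplicial complex on vertex type `V`. -/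
structure SComplex (V : Type*) [DecidableEq V] where
  faces : Finset (Finset V)
  nonempty_of_mem : ∀ σ ∈ faces, σ.Nonempty
  down_closed : ∀ σ ∈ faces, ∀ τ ⊆ σ, τ.Nonempty → τ ∈ faces

namespace SComplex

/-- The set `X(k)` of `k`-dimensional simplices (cardinality `k+1`). -/
def simps (X : SComplex V) (k : ℕ) : Finset (Finset V) :=
  X.faces.filter fun σ => σ.card = k + 1

/-- The number of vertices of a top-dimensional face. -/
def rank (X : SComplex V) : ℕ := X.faces.sup Finset.card

/-- The weight `c_X(σ)`. -/
noncomputable def weight (X : SComplex V) (σ : Finset V) : ℝ :=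
  (((X.simps (X.rank - 1)).filter fun τ => σ ⊆ τ).card : ℝ) /
    ((X.rank.choose σ.card) * ((X.simps (X.rank - 1)).card))

/-- `X` is pure of dimension `n-1` : every face is contained in a face with `n` vertices. -/
def IsPureOfRank (X : SComplex V) (n : ℕ) : Prop :=
  X.faces.Nonempty ∧ ∀ σ ∈ X.faces, ∃ τ ∈ X.faces, σ ⊆ τ ∧ τ.card = n

/-- The link `lk(X,σ)`. -/
def lk (X : SComplex V) (σ : Finset V) : SComplex V where
  faces := X.faces.filter fun η => η ∪ σ ∈ X.faces ∧ Disjoint η σ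
  nonempty_of_mem := fun η hη => X.nonempty_of_mem η (mem_filter.mp hη).1
  down_closed := by
    intro η hη τ hτη hτ
    rw [mem_filter] at hη ⊢
    refine ⟨X.down_closed η hη.1 τ hτη hτ,
      X.down_closed (η ∪ σ) hη.2.1 (τ ∪ σ) (union_subset_union_left hτη) ?_,
      hη.2.2.mono_left hτη⟩
    exact hτ.mono subset_union_left

/-- The star `st(X,σ)`. -/
def star (X : SComplex V) (σ : Finset V) : Finset (Finset V) :=
  X.faces.filter fun τ => τ ∪ σ ∈ X.faces

/-- The vertices of `X`. -/
def verts (X : SComplex V) [Fintype V] : Finset V :=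
  Finset.univ.filter fun v => ({v} : Finset V) ∈ X.faces

end SComplex
section Cochains

variable {G : Type*} [Group G]

/-- `φ ∈ C¹(X;G)`: an antisymmetric `G`-valued function on ordered pairs. -/
def IsCochain (G : Type*) [Group G] (φ : V → V → G) : Prop :=
  ∀ u v : V, φ u v = (φ v u)⁻¹

/-- The coboundary `d₁φ(u,v,w) = φ(u,v)φ(v,w)φ(w,u)`. -/
def d1 (φ : V → V → G) (u v w : V) : G := φ u v * φ v w * φ w u

/-- `φ ∈ Z¹(X;G)`: a cochain all of whose triangle equations hold. -/
def IsCocycle (X : SComplex V) (φ : V → V → G) : Prop :=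
  IsCochain G φ ∧ ∀ u v w : V, ({u, v, w} : Finset V) ∈ X.simps 2 → d1 φ u v w = 1

open Classical in
/-- The norm `‖φ‖`: total weight of the support of `φ`. -/
noncomputable def norm1 (X : SComplex V) (φ : V → V → G) : ℝ :=
  ∑ e ∈ (X.simps 1).filter (fun e => ∃ u v : V, e = {u, v} ∧ φ u v ≠ 1), X.weight e

open Classical in
/-- The norm `‖d₁φ‖`: total weight of the 2-simplices whose equation is violated. -/
noncomputable def normD1 (X : SComplex V) (φ : V → V → G) : ℝ :=
  ∑ τ ∈ (X.simps 2).filter (fun τ => ∃ u v w : V, τ = {u, v, w} ∧ d1 φ u v w ≠ 1), X.weight τ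

/-- `dist(φ,ψ) = ‖φψ⁻¹‖`. -/
noncomputable def dist1 (X : SComplex V) (φ ψ : V → V → G) : ℝ :=
  norm1 X (fun u v => φ u v * (ψ u v)⁻¹)

/-- The cosystolic norm `‖φ‖_csy`: the distance from `φ` to `Z¹(X;G)`. -/
noncomputable def csyNorm (X : SComplex V) (φ : V → V → G) : ℝ :=
  sInf {d : ℝ | ∃ ψ : V → V → G, IsCocycle X ψ ∧ d = dist1 X φ ψ}

/-- The cosystolic expansion `h₁(X;G)`. -/
noncomputable def h1 (X : SComplex V) (G : Type*) [Group G] : ℝ :=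
  sInf {r : ℝ | ∃ φ : V → V → G, IsCochain G φ ∧ ¬ IsCocycle X φ ∧
    r = normD1 X φ / csyNorm X φ}

end Cochains

section Fix

variable (G : Type*) [Group G] (S : Type*) [Fintype S] [MulAction G S]

open Classical in
/-- `fix(g) = |{s ∈ S : g•s = s}|`. -/
noncomputable def fixCard (g : G) : ℕ :=
  (Finset.univ.filter fun s : S => g • s = s).card

/-- `Fix_G(S) = max_{g ≠ 1} fix(g)`. -/
noncomputable def FixG : ℕ :=
  sSup {k : ℕ | ∃ g : G, g ≠ 1 ∧ fixCard G S g = k}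

end Fix
section Ycomplex

variable {G : Type*} [Group G] {S : Type*} [Fintype S] [DecidableEq S] [MulAction G S]
variable [Fintype V]

open Classical in
/-- The complex `Y_φ` associated to a cochain `φ`, together with the projection
`Prod.fst : Y_φ → X`. -/
noncomputable def Ycomplex (X : SComplex V) (φ : V → V → G) (S : Type*)
    [Fintype S] [DecidableEq S] [MulAction G S] : SComplex (V × S) where
  faces := Finset.univ.filter fun σ : Finset (V × S) =>
    σ.image Prod.fst ∈ X.faces ∧ (σ.image Prod.fst).card = σ.card ∧
    ∀ p ∈ σ, ∀ q ∈ σ, p.1 ≠ q.1 → p.2 = φ p.1 q.1 • q.2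
  nonempty_of_mem := by
    intro σ hσ
    rw [Finset.mem_filter] at hσ
    exact Finset.image_nonempty.mp (X.nonempty_of_mem _ hσ.2.1)
  down_closed := by
    intro σ hσ τ hτσ hτ
    rw [Finset.mem_filter] at hσ ⊢
    obtain ⟨-, h1, h2, h3⟩ := hσ
    refine ⟨Finset.mem_univ _,
      X.down_closed _ h1 _ (Finset.image_subset_image hτσ) (Finset.image_nonempty.mpr hτ),
      ?_, fun p hp q hq => h3 p (hτσ hp) q (hτσ hq)⟩
    exact Finset.card_image_iff.mpr ((Finset.card_image_iff.mp h2).mono hτσ)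

end Ycomplex

section Deficiency

variable {W : Type*} [DecidableEq W] [Fintype W] [Fintype V]

open Classical in
/-- `D_f(ut)`: the edges in the link of `f(ut)` that are not covered by the image of the
link of `ut`. -/
noncomputable def Dset (Y : SComplex W) (X : SComplex V) (f : W → V) (ut : W) :
    Finset (Finset V) :=
  ((X.lk {f ut}).simps 1).filter fun e => ¬ ∃ η ∈ (Y.lk {ut}).faces, η.image f = e

/-- The local deficiency `μ_f(ut)`. -/
noncomputable def locDef (Y : SComplex W) (X : SComplex V) (f : W → V) (ut : W) : ℝ :=
  ∑ e ∈ Dset Y X f ut, (X.lk {f ut}).weight e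

open Classical in
/-- The deficiency `m_f(Y)` of a map `f : Y → X`. -/
noncomputable def deficiency (Y : SComplex W) (X : SComplex V) (f : W → V) : ℝ :=
  ∑ u ∈ X.verts, (X.weight {u} / ((Y.verts.filter fun w => f w = u).card : ℝ)) *
    ∑ ut ∈ Y.verts.filter (fun w => f w = u), locDef Y X f ut

end Deficiency
section MapOver

variable [Fintype V]

/-- An element of `M(X;G,S)`: a surjective simplicial `|S|`-to-`1` map onto `X` whose
vertex fibers are identified with `S` and whose edge fibers are matchings given by the
action of elements of `G`. -/
structure MapOver (X : SComplex V) (G : Type*) (S : Type*) [Group G] [Fintype S]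
    [DecidableEq S] [MulAction G S] [Fintype V] where
  Y : SComplex (V × S)
  simplicial : ∀ τ ∈ Y.faces, τ.image Prod.fst ∈ X.faces
  injOnFaces : ∀ τ ∈ Y.faces, (τ.image Prod.fst).card = τ.card
  surj : ∀ σ ∈ X.faces, ∃ τ ∈ Y.faces, τ.image Prod.fst = σ
  fiber : ∀ p : V × S, ({p} : Finset (V × S)) ∈ Y.faces ↔ ({p.1} : Finset V) ∈ X.faces
  edges : ∀ u v : V, ({u, v} : Finset V) ∈ X.simps 1 → ∃ g : G,
    ∀ s t : S, (({(u, s), (v, t)} : Finset (V × S)) ∈ Y.faces ↔ s = g • t)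

variable {G : Type*} [Group G] {S : Type*} [Fintype S] [DecidableEq S] [MulAction G S]

open Classical in
/-- The set of edges of `Y` lying over a given edge of the base. -/
noncomputable def edgeFiber (Y : SComplex (V × S)) (e : Finset V) :
    Finset (Finset (V × S)) :=
  (Y.simps 1).filter fun e' => e'.image Prod.fst = e

open Classical in
/-- The distance between two elements of `M(X;G,S)`: the weight of the set of edges of
`X` over which the two edge fibers differ. -/
noncomputable def mdist (X : SComplex V) (M₁ M₂ : MapOver X G S) : ℝ :=
  ∑ e ∈ (X.simps 1).filter (fun e => edgeFiber M₁.Y e ≠ edgeFiber M₂.Y e), X.weight e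

/-- The distance from an element of `M(X;G,S)` to the set `M₀(X;G,S)` of genuine covers. -/
noncomputable def distToCovers (X : SComplex V) (M : MapOver X G S) : ℝ :=
  sInf {d : ℝ | ∃ M' : MapOver X G S, deficiency M'.Y X Prod.fst = 0 ∧ d = mdist X M M'}

/-- The `(G,S)`-cover-stability `c(X;G,S)`. -/
noncomputable def coverStability (X : SComplex V) (G : Type*) (S : Type*) [Group G]
    [Fintype S] [DecidableEq S] [MulAction G S] : ℝ :=
  sInf {r : ℝ | ∃ M : MapOver X G S, deficiency M.Y X Prod.fst ≠ 0 ∧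
    r = deficiency M.Y X Prod.fst / distToCovers X M}

end MapOver
section Paths

/-- A (possibly closed) edge path in a complex: consecutive vertices span edges. -/
def IsEdgePath (K : SComplex V) (p : List V) : Prop :=
  (∀ v ∈ p, ({v} : Finset V) ∈ K.faces) ∧
    p.Chain' fun u v => ({u, v} : Finset V) ∈ K.faces

/-- Combinatorial homotopy of edge paths, generated by erasing repetitions and by
collapsing across simplices. -/
inductive Homotopic (K : SComplex V) : List V → List V → Prop
  | refl (p : List V) : Homotopic K p p
  | symm {p q : List V} : Homotopic K p q → Homotopic K q p
  | trans {p q r : List V} : Homotopic K p q → Homotopic K q r → Homotopic K p r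
  | collapse (p q : List V) (a b c : V) (h : ({a, b, c} : Finset V) ∈ K.faces) :
      Homotopic K (p ++ a :: b :: c :: q) (p ++ a :: c :: q)
  | dedup (p q : List V) (a : V) : Homotopic K (p ++ a :: a :: q) (p ++ a :: q)

/-- `K` is connected: any two vertices are joined by an edge path. -/
def SComplexConnected (K : SComplex V) : Prop :=
  ∀ u v : V, ({u} : Finset V) ∈ K.faces → ({v} : Finset V) ∈ K.faces →
    ∃ p : List V, IsEdgePath K p ∧ p.head? = some u ∧ p.getLast? = some v

/-- `K` is simply connected: connected, and every closed edge path is null-homotopic. -/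
def SimplyConnected (K : SComplex V) : Prop :=
  SComplexConnected K ∧
    ∀ (p : List V) (a : V), IsEdgePath K p → p.head? = some a → p.getLast? = some a →
      Homotopic K p [a]

end Paths

section OrderComplex

open Classical in
/-- The order complex of `L ∖ {⊥, ⊤}`: simplices are the nonempty chains avoiding
`⊥` and `⊤`. -/
noncomputable def orderComplex (L : Type*) [Lattice L] [BoundedOrder L] [Fintype L]
    [DecidableEq L] : SComplex L where
  faces := Finset.univ.filter fun σ : Finset L =>
    σ.Nonempty ∧ (∀ x ∈ σ, x ≠ ⊥ ∧ x ≠ ⊤) ∧ ∀ x ∈ σ, ∀ y ∈ σ, x ≤ y ∨ y ≤ x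
  nonempty_of_mem := fun σ hσ => (Finset.mem_filter.mp hσ).2.1
  down_closed := by
    intro σ hσ τ hτσ hτ
    rw [Finset.mem_filter] at hσ ⊢
    exact ⟨Finset.mem_univ _, hτ, fun x hx => hσ.2.2.1 x (hτσ hx),
      fun x hx y hy => hσ.2.2.2 x (hτσ hx) y (hτσ hy)⟩

end OrderComplex
section Building

variable (F : Type*) [Field F] [Fintype F]

noncomputable instance : Fintype (Submodule F (Fin 4 → F)) := by
  have : Finite (Submodule F (Fin 4 → F)) :=
    Finite.of_injective (fun N => (N : Set (Fin 4 → F))) SetLike.coe_injective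
  exact Fintype.ofFinite _

noncomputable instance : DecidableEq (Submodule F (Fin 4 → F)) := Classical.decEq _

/-- The spherical building `A₃(F_q)`: the order complex of the poset of nontrivial proper
linear subspaces of `F_q⁴`. -/
noncomputable def A3 : SComplex (Submodule F (Fin 4 → F)) :=
  orderComplex (Submodule F (Fin 4 → F))

end Building
section FixEdge

variable {G : Type*} [Group G]

open Classical in
/-- The value `fix(d₁φ(u,v₁,v₂))` for an unordered edge `e = {v₁,v₂}` of the link of `u`
(well defined for cochains, since `fix` is invariant under inversion and conjugation). -/
noncomputable def fixEdge (S : Type*) [Fintype S] [MulAction G S] (φ : V → V → G)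
    (u : V) (e : Finset V) : ℕ :=
  sSup {k : ℕ | ∃ v₁ ∈ e, ∃ v₂ ∈ e, v₁ ≠ v₂ ∧ k = fixCard G S (d1 φ u v₁ v₂)}

end FixEdge
section MainProofAux

variable {G : Type*} [Group G] {S : Type*} [Fintype S] [DecidableEq S] [MulAction G S]

lemma fixCard_inv (g : G) : fixCard G S g⁻¹ = fixCard G S g := by
  classical
  unfold fixCard
  congr 1
  ext s
  simp only [Finset.mem_filter, Finset.mem_univ, true_and]
  constructor
  · intro h; conv_lhs => rw [← h, smul_inv_smul]
  · intro h; conv_lhs => rw [← h, inv_smul_smul]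

lemma d1_swap {φ : V → V → G} (hφ : IsCochain G φ) (u v w : V) :
    d1 φ u w v = (d1 φ u v w)⁻¹ := by
  simp only [d1, mul_inv_rev, mul_assoc]
  rw [hφ u w, hφ w v, hφ v u]

lemma fixEdge_pair {φ : V → V → G} (hφ : IsCochain G φ) (u v w : V) (hvw : v ≠ w) :
    fixEdge S φ u {v, w} = fixCard G S (d1 φ u v w) := by
  have hset : {k : ℕ | ∃ v₁ ∈ ({v, w} : Finset V), ∃ v₂ ∈ ({v, w} : Finset V),
      v₁ ≠ v₂ ∧ k = fixCard G S (d1 φ u v₁ v₂)} = {fixCard G S (d1 φ u v w)} := by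
    ext k
    simp only [Set.mem_setOf_eq, Set.mem_singleton_iff, Finset.mem_insert,
      Finset.mem_singleton]
    constructor
    · rintro ⟨v₁, h₁, v₂, h₂, hne, rfl⟩
      rcases h₁ with rfl | rfl <;> rcases h₂ with rfl | rfl
      · exact absurd rfl hne
      · rfl
      · rw [d1_swap hφ, fixCard_inv]
      · exact absurd rfl hne
    · rintro rfl
      exact ⟨v, Or.inl rfl, w, Or.inr rfl, hvw, rfl⟩
  rw [fixEdge, hset, csSup_singleton]

variable [Fintype V]

lemma mem_Ycomplex_iff {X : SComplex V} {φ : V → V → G} (σ : Finset (V × S)) :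
    σ ∈ (Ycomplex X φ S).faces ↔ σ.image Prod.fst ∈ X.faces ∧
      (σ.image Prod.fst).card = σ.card ∧
      ∀ p ∈ σ, ∀ q ∈ σ, p.1 ≠ q.1 → p.2 = φ p.1 q.1 • q.2 := by
  simp [Ycomplex, Finset.mem_filter]

lemma singleton_mem_Ycomplex {X : SComplex V} {φ : V → V → G} (u : V) (s : S) :
    ({(u, s)} : Finset (V × S)) ∈ (Ycomplex X φ S).faces ↔ ({u} : Finset V) ∈ X.faces := by
  rw [mem_Ycomplex_iff]
  simp

lemma fiber_eq {X : SComplex V} {φ : V → V → G} (u : V) (hu : ({u} : Finset V) ∈ X.faces) :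
    ((Ycomplex X φ S).verts.filter fun w => w.1 = u) =
      Finset.univ.image (fun s : S => (u, s)) := by
  ext p
  simp only [Finset.mem_filter, Finset.mem_image, Finset.mem_univ, true_and,
    SComplex.verts]
  constructor
  · rintro ⟨-, h⟩
    exact ⟨p.2, by rw [← h]⟩
  · rintro ⟨s, rfl⟩
    exact ⟨(singleton_mem_Ycomplex u s).mpr hu, rfl⟩

lemma mem_Dset_iff {X : SComplex V} {φ : V → V → G} (hφ : IsCochain G φ)
    {u v w : V} (hvw : v ≠ w) (huv : u ≠ v) (huw : u ≠ w)
    (he : ({v, w} : Finset V) ∈ (X.lk {u}).simps 1) (s : S) :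
    ({v, w} : Finset V) ∈ Dset (Ycomplex X φ S) X Prod.fst (u, s) ↔
      ¬ d1 φ u v w • s = s := by
  classical
  set Y := Ycomplex X φ S with hY
  have hlk : ({v, w} : Finset V) ∈ (X.lk {u}).faces := (Finset.mem_filter.mp he).1
  have hlk' := Finset.mem_filter.mp hlk
  have huvw : ({v, w} : Finset V) ∪ {u} ∈ X.faces := hlk'.2.1
  rw [Dset, Finset.mem_filter]
  constructor
  · rintro ⟨-, hno⟩ hfix
    apply hno
    refine ⟨{(v, φ v u • s), (w, φ w u • s)}, ?_, ?_⟩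
    · have hinv1 : φ u v • φ v u • s = s := by
        rw [smul_smul, hφ u v, inv_mul_cancel, one_smul]
      have hinv2 : φ u w • φ w u • s = s := by
        rw [smul_smul, hφ u w, inv_mul_cancel, one_smul]
      have hf5 : φ v u • s = φ v w • φ w u • s := by
        conv_lhs => rw [← hfix]
        rw [d1, smul_smul, hφ v u,
          show (φ u v)⁻¹ * (φ u v * φ v w * φ w u) = φ v w * φ w u by group,
          mul_smul]
      have hf6 : φ w u • s = φ w v • φ v u • s := by
        rw [hf5, smul_smul, smul_smul, hφ w v]
        congr 1
        group
      rw [SComplex.lk, Finset.mem_filter]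
      have himg : ({(v, φ v u • s), (w, φ w u • s)} : Finset (V × S)).image Prod.fst
          = {v, w} := by simp
      have hset3 : ({(v, φ v u • s), (w, φ w u • s)} : Finset (V × S)) ∪ {(u, s)}
          = {(v, φ v u • s), (w, φ w u • s), (u, s)} := by
        ext p; simp [or_assoc]
      have huvw' : ({v, w} : Finset V) ∪ {u} = {v, w, u} := by ext x; simp [or_assoc]
      have himg2 : (({(v, φ v u • s), (w, φ w u • s)} : Finset (V × S)) ∪ {(u, s)}).image
          Prod.fst = {v, w} ∪ {u} := by
        rw [hset3, huvw']; simp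
      have hcard : ({(v, φ v u • s), (w, φ w u • s)} : Finset (V × S)).card = 2 := by
        rw [Finset.card_insert_of_notMem, Finset.card_singleton]
        simp only [Finset.mem_singleton, Prod.mk.injEq, not_and]
        intro h; exact absurd h hvw
      have hcard3 : (({(v, φ v u • s), (w, φ w u • s)} : Finset (V × S)) ∪ {(u, s)}).card
          = 3 := by
        rw [hset3, Finset.card_insert_of_notMem, Finset.card_insert_of_notMem,
          Finset.card_singleton]
        · simp [Prod.ext_iff, hvw, huv, huw, Ne.symm huv, Ne.symm huw, Ne.symm hvw]
        · simp [Prod.ext_iff, hvw, huv, huw, Ne.symm huv, Ne.symm huw, Ne.symm hvw]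
      have hcomp : ∀ p ∈ ({(v, φ v u • s), (w, φ w u • s)} : Finset (V × S)) ∪ {(u, s)},
          ∀ q ∈ ({(v, φ v u • s), (w, φ w u • s)} : Finset (V × S)) ∪ {(u, s)},
          p.1 ≠ q.1 → p.2 = φ p.1 q.1 • q.2 := by
        intro p hp q hq hne
        simp only [Finset.mem_union, Finset.mem_insert, Finset.mem_singleton] at hp hq
        rcases hp with (rfl | rfl) | rfl <;> rcases hq with (rfl | rfl) | rfl <;>
          first
            | exact absurd rfl hne
            | exact hf5
            | exact hf6
            | exact hinv1.symm
            | exact hinv2.symm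
            | rfl
      refine ⟨Finset.mem_filter.mpr ⟨Finset.mem_univ _, ?_, ?_, fun p hp q hq hne =>
          hcomp p (Finset.mem_union_left _ hp) q (Finset.mem_union_left _ hq) hne⟩,
        ?_, ?_⟩
      · rw [himg]; exact hlk'.1
      · rw [himg, hcard]
        rw [Finset.card_insert_of_notMem (by simpa using hvw), Finset.card_singleton]
      · refine Finset.mem_filter.mpr ⟨Finset.mem_univ _, ?_, ?_, hcomp⟩
        · rw [himg2]; exact huvw
        · rw [himg2, hcard3, huvw']
          rw [Finset.card_insert_of_notMem (by simp [hvw, Ne.symm huv]),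
            Finset.card_insert_of_notMem (by simp [Ne.symm huw]), Finset.card_singleton]
      · simp [Finset.disjoint_singleton_right, Prod.ext_iff, huv, huw, Ne.symm huv,
          Ne.symm huw]
    · simp
  · intro hfix
    refine ⟨he, ?_⟩
    rintro ⟨η, hη, himg⟩
    apply hfix
    rw [SComplex.lk, Finset.mem_filter] at hη
    obtain ⟨-, hσ, hdisj⟩ := hη
    rw [mem_Ycomplex_iff] at hσ
    obtain ⟨-, -, hcomp⟩ := hσ
    have hus : ((u, s) : V × S) ∈ η ∪ {(u, s)} := Finset.mem_union_right _ (by simp)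
    have hv : v ∈ η.image Prod.fst := by rw [himg]; simp
    have hw : w ∈ η.image Prod.fst := by rw [himg]; simp
    obtain ⟨p, hp, hp1⟩ := Finset.mem_image.mp hv
    obtain ⟨q, hq, hq1⟩ := Finset.mem_image.mp hw
    have hp' : p ∈ η ∪ {(u, s)} := Finset.mem_union_left _ hp
    have hq' : q ∈ η ∪ {(u, s)} := Finset.mem_union_left _ hq
    have h1 : s = φ u p.1 • p.2 := hcomp (u, s) hus p hp' (by rw [hp1]; exact huv)
    have h2 : q.2 = φ q.1 u • s := hcomp q hq' (u, s) hus (by rw [hq1]; exact huw.symm)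
    have h3 : p.2 = φ p.1 q.1 • q.2 := hcomp p hp' q hq'
      (by rw [hp1, hq1]; exact hvw)
    rw [d1, mul_smul, mul_smul]
    have hwu : φ w u • s = q.2 := by rw [h2, hq1]
    rw [hwu, ← hq1, ← hp1, ← h3]
    exact h1.symm

lemma card_filter_not_smul (g : G) :
    (((Finset.univ : Finset S).filter fun s => ¬ g • s = s).card : ℝ) =
      (Fintype.card S : ℝ) - fixCard G S g := by
  classical
  have hfix : fixCard G S g = ((Finset.univ : Finset S).filter fun s => g • s = s).card := by
    rw [fixCard]; congr 1; exact Finset.filter_congr_decidable _ _ _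
  rw [Finset.filter_not, Finset.card_sdiff_of_subset (Finset.filter_subset _ _), Nat.cast_sub
    (Finset.card_filter_le _ _), Finset.card_univ, hfix]

end MainProofAux

/-- the chain of equalities (3.3):
`|S|·m(Y_φ) = Σ_u c_X(u) Σ_{e ∈ lk(X,u)(1)} (|S| - fix(d₁φ(u∪e)))·c_{lk(X,u)}(e)`. -/
theorem card_mul_deficiency_eq
    {V : Type*} [Fintype V] [DecidableEq V]
    {G : Type*} [Group G] {S : Type*} [Fintype S] [DecidableEq S] [Nonempty S]
    [MulAction G S]
    (X : SComplex V) (n : ℕ) (hn : 3 ≤ n) (hpure : X.IsPureOfRank n)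
    (φ : V → V → G) (hφ : IsCochain G φ) :
    (Fintype.card S : ℝ) * deficiency (Ycomplex X φ S) X Prod.fst =
      ∑ u ∈ X.verts, X.weight {u} *
        ∑ e ∈ (X.lk {u}).simps 1,
          ((Fintype.card S : ℝ) - fixEdge S φ u e) * (X.lk {u}).weight e := by
  classical
  rw [deficiency, Finset.mul_sum]
  refine Finset.sum_congr rfl fun u hu => ?_
  have hS : (Fintype.card S : ℝ) ≠ 0 := Nat.cast_ne_zero.mpr Fintype.card_ne_zero
  have hu' : ({u} : Finset V) ∈ X.faces := by
    simpa [SComplex.verts] using hu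
  have hinj : Function.Injective (fun s : S => ((u, s) : V × S)) := by
    intro a b h
    exact congrArg Prod.snd h
  rw [fiber_eq u hu', Finset.card_image_of_injective _ hinj, Finset.card_univ,
    Finset.sum_image (fun a _ b _ h => hinj h)]
  have key : ∑ s : S, locDef (Ycomplex X φ S) X Prod.fst (u, s)
      = ∑ e ∈ (X.lk {u}).simps 1,
          ((Fintype.card S : ℝ) - fixEdge S φ u e) * (X.lk {u}).weight e := by
    have hloc : ∀ s : S, locDef (Ycomplex X φ S) X Prod.fst (u, s)
        = ∑ e ∈ (X.lk {u}).simps 1,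
            if e ∈ Dset (Ycomplex X φ S) X Prod.fst (u, s) then (X.lk {u}).weight e
            else 0 := by
      intro s
      have hsub : Dset (Ycomplex X φ S) X Prod.fst (u, s) ⊆ (X.lk {u}).simps 1 :=
        Finset.filter_subset _ _
      rw [Finset.sum_ite_mem, Finset.inter_eq_right.mpr hsub]
      rfl
    simp only [hloc]
    rw [Finset.sum_comm]
    refine Finset.sum_congr rfl fun e he => ?_
    have he2 : e.card = 2 := (Finset.mem_filter.mp he).2
    obtain ⟨v, w, hvw, rfl⟩ := Finset.card_eq_two.mp he2
    have hlkmem := (Finset.mem_filter.mp he).1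
    have hdisj : Disjoint ({v, w} : Finset V) {u} :=
      (Finset.mem_filter.mp hlkmem).2.2
    have huv : u ≠ v := by
      intro h
      exact (Finset.disjoint_right.mp hdisj (Finset.mem_singleton_self u))
        (by rw [h]; simp)
    have huw : u ≠ w := by
      intro h
      exact (Finset.disjoint_right.mp hdisj (Finset.mem_singleton_self u))
        (by rw [h]; simp)
    calc ∑ s : S, (if ({v, w} : Finset V) ∈ Dset (Ycomplex X φ S) X Prod.fst (u, s)
            then (X.lk {u}).weight {v, w} else 0)
        = ∑ s : S, (if ¬ d1 φ u v w • s = s then (X.lk {u}).weight {v, w} else 0) :=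
          Finset.sum_congr rfl fun s _ =>
            if_congr (mem_Dset_iff hφ hvw huv huw he s) rfl rfl
      _ = ((Finset.univ.filter fun s : S => ¬ d1 φ u v w • s = s).card : ℝ) *
            (X.lk {u}).weight {v, w} := by
          rw [← Finset.sum_filter, Finset.sum_const, nsmul_eq_mul]
      _ = ((Fintype.card S : ℝ) - fixEdge S φ u {v, w}) * (X.lk {u}).weight {v, w} := by
          rw [card_filter_not_smul, fixEdge_pair hφ u v w hvw]
  rw [key]
  field_simp
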